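/- Let U ⊆ ℝ^{n-1} be open, and let X : U → ℝⁿ \ {0} and N : U → ℝⁿ be continuously differentiable maps such that ‖N(u)‖ = 1, ⟨N(u), ∂_α X(u)⟩ = 0 for all α, and ⟨X(u), N(u)⟩ < 0 for all u ∈ U. Define X* = N/(-⟨X,N⟩) and N* = X/‖X‖, and suppose that at a point u ∈ U the determinants det(N, ∂₁X, …, ∂_{n-1}X) and det(N*, ∂₁X*, …, ∂_{n-1}X*) are nonzero. Define the Gauss curvatures κ = |det(N, ∂₁N, …, ∂_{n-1}N) / det(N, ∂₁X, …, ∂_{n-1}X)| and κ* = |det(N*, ∂₁N*, …, ∂_{n-1}N*) / det(N*, ∂₁X*, …, ∂_{n-1}X*)|. Then κ · κ* = ⟨X,N⟩^{n+1} ⟨X*,N*⟩^{n+1}. -/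

import Mathlib

open Set RealInnerProductSpace

noncomputable section

/-- The determinant of the `n × n` matrix whose columns are `v 0, …, v (n-1)`. -/
def detCols {n : ℕ} (v : Fin n → EuclideanSpace ℝ (Fin n)) : ℝ :=
  Matrix.det (Matrix.of fun i j => v j i)

/-- The partial derivative `∂_α f (u)` of a map between Euclidean spaces. -/
def pderiv' {m n : ℕ} (f : EuclideanSpace ℝ (Fin m) → EuclideanSpace ℝ (Fin n))
    (u : EuclideanSpace ℝ (Fin m)) (α : Fin m) : EuclideanSpace ℝ (Fin n) :=
  fderiv ℝ f u (EuclideanSpace.single α 1)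

/-- `detCols` as an alternating map on `EuclideanSpace`. -/
def detE (n : ℕ) : (EuclideanSpace ℝ (Fin n)) [⋀^Fin n]→ₗ[ℝ] ℝ :=
  (Matrix.detRowAlternating (R := ℝ) (n := Fin n)).compLinearMap
    (WithLp.linearEquiv 2 ℝ (Fin n → ℝ)).toLinearMap

lemma detCols_eq_detE {n : ℕ} (v : Fin n → EuclideanSpace ℝ (Fin n)) :
    detCols v = detE n v := by
  rw [detCols, ← Matrix.det_transpose]
  rfl


variable {n : ℕ}

local notation "E" => EuclideanSpace ℝ (Fin (n + 1))

lemma detCols_zero_of_orth (v : Fin (n+1) → E) (b : E) (hb : b ≠ 0)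
    (h : ∀ j, ⟪b, v j⟫ = (0 : ℝ)) : detCols v = 0 := by
  rw [detCols, ← Matrix.det_transpose, ← Matrix.exists_mulVec_eq_zero_iff]
  refine ⟨(fun i => b i), fun h0 => hb ?_, ?_⟩
  · ext i; exact congrFun h0 i
  · ext j
    have := h j
    rw [PiLp.inner_apply] at this
    simpa [Matrix.mulVec, dotProduct, mul_comm] using this

lemma detCols_cons_smul_head (x : E) (w : Fin n → E) (r : ℝ) :
    detCols (Fin.cons (r • x) w) = r * detCols (Fin.cons x w) := by
  rw [detCols_eq_detE, detCols_eq_detE]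
  exact (detE (n+1)).toMultilinearMap.cons_smul w r x

lemma detCols_cons_add_head (x y : E) (w : Fin n → E) :
    detCols (Fin.cons (x + y) w) = detCols (Fin.cons x w) + detCols (Fin.cons y w) := by
  rw [detCols_eq_detE, detCols_eq_detE, detCols_eq_detE]
  exact (detE (n+1)).toMultilinearMap.cons_add w x y

lemma detCols_cons_smul_tail (x : E) (w : Fin n → E) (r : ℝ) :
    detCols (Fin.cons x (fun α => r • w α)) = r ^ n * detCols (Fin.cons x w) := by
  rw [detCols_eq_detE, detCols_eq_detE]
  have e1 : (Fin.cons x (fun α => r • w α) : Fin (n+1) → E)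
      = fun j => (Fin.cons (1:ℝ) (fun _ : Fin n => r) : Fin (n+1) → ℝ) j • Fin.cons x w j := by
    funext j
    refine Fin.cases ?_ ?_ j <;> simp
  rw [e1]
  have h2 := MultilinearMap.map_smul_univ ((detE (n+1)).toMultilinearMap)
    (Fin.cons (1:ℝ) (fun _ : Fin n => r)) (Fin.cons x w)
  refine h2.trans ?_
  rw [Fin.prod_cons]
  simp [smul_eq_mul]

lemma detCols_cons_colop (x : E) (w : Fin n → E) (g : Fin n → ℝ) :
    detCols (Fin.cons x (fun α => w α + g α • x)) = detCols (Fin.cons x w) := by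
  classical
  have key : ∀ s : Finset (Fin n),
      detCols (Fin.cons x (fun α => w α + (if α ∈ s then g α else 0) • x))
        = detCols (Fin.cons x w) := by
    intro s
    induction s using Finset.induction with
    | empty => simp
    | @insert β s hβ ih =>
      set tail : Fin n → E := fun α => w α + (if α ∈ s then g α else 0) • x with htail
      have e1 : (fun α => w α + (if α ∈ insert β s then g α else 0) • x)
          = Function.update tail β (w β + g β • x) := by
        funext α
        by_cases hα : α = β
        · subst hα; simp [htail, hβ]
        · simp [htail, Function.update, hα]
      rw [e1, detCols_eq_detE, Fin.cons_update,
        AlternatingMap.map_update_add, AlternatingMap.map_update_smul]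
      have hz : (detE (n+1)) (Function.update (Fin.cons x tail : Fin (n+1) → E) β.succ x) = 0 := by
        refine (detE (n+1)).map_eq_zero_of_eq _ (i := 0) (j := β.succ) ?_ ?_
        · rw [Function.update_self, Function.update_of_ne (Fin.succ_ne_zero β).symm]
          simp
        · exact (Fin.succ_ne_zero β).symm
      have hupd : Function.update (Fin.cons x tail : Fin (n+1) → E) β.succ (w β) = Fin.cons x tail := by
        have h3 : (Fin.cons x tail : Fin (n+1) → E) β.succ = w β := by
          simp [htail, hβ]
        rw [← h3, Function.update_eq_self]
      rw [hz, hupd, ← detCols_eq_detE, ih]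
      simp
  have := key Finset.univ
  simpa using this

lemma cancel_aux (C x y : ℝ) (hx : x ≠ 0) (hy : y ≠ 0) : y / x * (C * (x / y)) = C := by
  field_simp

lemma inner2_aux (t na : ℝ) (ht : t ≠ 0) (hna : na ≠ 0) : (-t)⁻¹ * (na⁻¹ * t) = -na⁻¹ := by
  rw [inv_neg]
  field_simp

lemma frac_aux (m : ℕ) (t na DP DQ : ℝ) (hna : na ≠ 0) (hmt0 : -t ≠ 0) (hDQ0 : DQ ≠ 0) :
    (na⁻¹ * ((na⁻¹) ^ m * (t * DP))) / (na⁻¹ * (((-t)⁻¹) ^ m * ((na ^ 2 / t) * DQ)))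
      = ((-t) ^ m * t ^ 2 / na ^ (m + 2)) * (DP / DQ) := by
  rw [show ((-t)⁻¹ : ℝ) ^ m = ((-t) ^ m)⁻¹ by rw [inv_pow]]
  have hp : (-t:ℝ) ^ m ≠ 0 := pow_ne_zero _ hmt0
  have hnm : na ^ m * na⁻¹ ^ m = 1 := by rw [← mul_pow, mul_inv_cancel₀ hna, one_pow]
  field_simp
  linear_combination (na ^ 2 * t ^ 2 * DP) * hnm

/-- With `n = m + 1`: in the situation of Statements 15/16, if at `u ∈ U`
the determinants `det(N, ∂X)` and `det(N*, ∂X*)` are nonzero, the Gauss curvatures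
`κ = |det(N,∂N)/det(N,∂X)|` and `κ* = |det(N*,∂N*)/det(N*,∂X*)|` satisfy
`κ·κ* = ⟨X,N⟩^{n+1} ⟨X*,N*⟩^{n+1}`. -/
theorem gauss_curvature_product {m : ℕ}
    (U : Set (EuclideanSpace ℝ (Fin m))) (hU : IsOpen U)
    (X N : EuclideanSpace ℝ (Fin m) → EuclideanSpace ℝ (Fin (m + 1)))
    (hX : ContDiffOn ℝ 1 X U) (hN : ContDiffOn ℝ 1 N U)
    (hX0 : ∀ u ∈ U, X u ≠ 0)
    (hNnorm : ∀ u ∈ U, ‖N u‖ = 1)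
    (hOrth : ∀ u ∈ U, ∀ α : Fin m, ⟪N u, pderiv' X u α⟫ = (0 : ℝ))
    (hneg : ∀ u ∈ U, ⟪X u, N u⟫ < (0 : ℝ))
    (u : EuclideanSpace ℝ (Fin m)) (hu : u ∈ U)
    (hd : detCols (Fin.cons (N u) (fun α => pderiv' X u α)) ≠ 0)
    (hd' : detCols (Fin.cons (‖X u‖⁻¹ • X u)
        (fun α => pderiv' (fun v => (-(⟪X v, N v⟫ : ℝ))⁻¹ • N v) u α)) ≠ 0) :
    |detCols (Fin.cons (N u) (fun α => pderiv' N u α)) /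
        detCols (Fin.cons (N u) (fun α => pderiv' X u α))| *
      |detCols (Fin.cons (‖X u‖⁻¹ • X u)
            (fun α => pderiv' (fun v => ‖X v‖⁻¹ • X v) u α)) /
          detCols (Fin.cons (‖X u‖⁻¹ • X u)
            (fun α => pderiv' (fun v => (-(⟪X v, N v⟫ : ℝ))⁻¹ • N v) u α))|
      = (⟪X u, N u⟫ : ℝ) ^ (m + 2) *
          (⟪(-(⟪X u, N u⟫ : ℝ))⁻¹ • N u, ‖X u‖⁻¹ • X u⟫ : ℝ) ^ (m + 2) := by
  have hUu : U ∈ nhds u := hU.mem_nhds hu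
  have hXd : DifferentiableAt ℝ X u := (hX.contDiffAt hUu).differentiableAt one_ne_zero
  have hNd : DifferentiableAt ℝ N u := (hN.contDiffAt hUu).differentiableAt one_ne_zero
  set a : EuclideanSpace ℝ (Fin (m+1)) := X u with ha
  set b : EuclideanSpace ℝ (Fin (m+1)) := N u with hbdef
  set t : ℝ := ⟪X u, N u⟫ with htdef
  have ht : t < 0 := hneg u hu
  have ht0 : t ≠ 0 := ne_of_lt ht
  have ha0 : a ≠ 0 := hX0 u hu
  have hna : ‖a‖ ≠ 0 := norm_ne_zero_iff.2 ha0
  have hnb : ‖b‖ = 1 := hNnorm u hu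
  have hb0 : b ≠ 0 := by intro h; rw [h] at hnb; simp at hnb
  have hbb : ⟪b, b⟫ = (1:ℝ) := by
    rw [real_inner_self_eq_norm_sq, hnb]; norm_num
  have hba : (⟪b, a⟫:ℝ) = t := by
    rw [real_inner_comm, ha, hbdef, ← htdef]
  set P : Fin m → EuclideanSpace ℝ (Fin (m+1)) := fun α => pderiv' X u α with hP
  set Q : Fin m → EuclideanSpace ℝ (Fin (m+1)) := fun α => pderiv' N u α with hQ
  have hbP : ∀ α, ⟪b, P α⟫ = (0:ℝ) := fun α => hOrth u hu α
  -- ⟪b, Q α⟫ = 0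
  have hbQ : ∀ α, ⟪b, Q α⟫ = (0:ℝ) := by
    intro α
    have hinner : HasFDerivAt (fun v => (⟪N v, N v⟫:ℝ))
        ((fderivInnerCLM ℝ (N u, N u)).comp ((fderiv ℝ N u).prod (fderiv ℝ N u))) u :=
      HasFDerivAt.inner ℝ hNd.hasFDerivAt hNd.hasFDerivAt
    have hconst : HasFDerivAt (fun v => (⟪N v, N v⟫:ℝ)) (0 : EuclideanSpace ℝ (Fin m) →L[ℝ] ℝ) u := by
      refine (hasFDerivAt_const (1:ℝ) u).congr_of_eventuallyEq ?_
      filter_upwards [hUu] with v hv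
      rw [real_inner_self_eq_norm_sq, hNnorm v hv]; norm_num
    have h0 := hinner.unique hconst
    have := congrArg (fun L : EuclideanSpace ℝ (Fin m) →L[ℝ] ℝ =>
      L (EuclideanSpace.single α 1)) h0
    simp only [ContinuousLinearMap.comp_apply, ContinuousLinearMap.prod_apply,
      fderivInnerCLM_apply, ContinuousLinearMap.zero_apply] at this
    have hQα : fderiv ℝ N u (EuclideanSpace.single α 1) = Q α := rfl
    rw [hQα] at this
    have hcomm : (⟪Q α, b⟫:ℝ) = ⟪b, Q α⟫ := real_inner_comm _ _
    rw [hcomm] at this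
    linarith
  -- derivative of N* = ‖X‖⁻¹ • X
  obtain ⟨d, hdN⟩ : ∃ d : Fin m → ℝ,
      (fun α => pderiv' (fun v => ‖X v‖⁻¹ • X v) u α)
        = fun α => ‖a‖⁻¹ • P α + d α • a := by
    have hnorm : DifferentiableAt ℝ (fun v => ‖X v‖) u := hXd.norm ℝ ha0
    have hφ : DifferentiableAt ℝ (fun v => ‖X v‖⁻¹) u := hnorm.inv hna
    have hA : HasFDerivAt (fun v => ‖X v‖⁻¹ • X v)
        (‖a‖⁻¹ • fderiv ℝ X u
          + (fderiv ℝ (fun v => ‖X v‖⁻¹) u).smulRight a) u :=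
      hφ.hasFDerivAt.smul hXd.hasFDerivAt
    refine ⟨fun α => fderiv ℝ (fun v => ‖X v‖⁻¹) u (EuclideanSpace.single α 1), ?_⟩
    funext α
    show fderiv ℝ (fun v => ‖X v‖⁻¹ • X v) u (EuclideanSpace.single α 1) = _
    rw [hA.fderiv]
    rfl
  -- derivative of X* = (-⟪X,N⟫)⁻¹ • N
  have hdX : (fun α => pderiv' (fun v => (-(⟪X v, N v⟫ : ℝ))⁻¹ • N v) u α)
      = fun α => (-t)⁻¹ • (Q α + (-(⟪a, Q α⟫ / t)) • b) := by
    have hg : HasFDerivAt (fun v => (⟪X v, N v⟫:ℝ))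
        ((fderivInnerCLM ℝ (X u, N u)).comp ((fderiv ℝ X u).prod (fderiv ℝ N u))) u :=
      HasFDerivAt.inner ℝ hXd.hasFDerivAt hNd.hasFDerivAt
    set G := (fderivInnerCLM ℝ (X u, N u)).comp ((fderiv ℝ X u).prod (fderiv ℝ N u)) with hG
    have hng : HasFDerivAt (fun v => -(⟪X v, N v⟫:ℝ)) (-G) u := hg.neg
    have hinv : HasDerivAt (fun y : ℝ => y⁻¹) (-((-t) ^ 2)⁻¹) (-t) :=
      hasDerivAt_inv (neg_ne_zero.2 ht0)
    have hτ : HasFDerivAt (fun v => (-(⟪X v, N v⟫:ℝ))⁻¹)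
        ((-((-t) ^ 2)⁻¹) • (-G)) u := hinv.comp_hasFDerivAt u hng
    have hB : HasFDerivAt (fun v => (-(⟪X v, N v⟫:ℝ))⁻¹ • N v)
        ((-t)⁻¹ • fderiv ℝ N u + ((-((-t) ^ 2)⁻¹) • (-G)).smulRight b) u := by
      have := hτ.smul hNd.hasFDerivAt
      exact this
    funext α
    show fderiv ℝ (fun v => (-(⟪X v, N v⟫ : ℝ))⁻¹ • N v) u (EuclideanSpace.single α 1) = _
    rw [hB.fderiv]
    have hGe : G (EuclideanSpace.single α 1) = ⟪a, Q α⟫ := by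
      rw [hG]
      simp only [ContinuousLinearMap.comp_apply, ContinuousLinearMap.prod_apply,
        fderivInnerCLM_apply]
      have h1 : fderiv ℝ N u (EuclideanSpace.single α 1) = Q α := rfl
      have h2 : fderiv ℝ X u (EuclideanSpace.single α 1) = P α := rfl
      have h3 : (⟪P α, N u⟫:ℝ) = 0 := by
        rw [real_inner_comm]; exact hbP α
      rw [h1, h2, h3, add_zero]
    simp only [ContinuousLinearMap.add_apply, ContinuousLinearMap.smul_apply,
      ContinuousLinearMap.smulRight_apply, ContinuousLinearMap.neg_apply, hGe, smul_eq_mul]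
    have h1 : fderiv ℝ N u (EuclideanSpace.single α 1) = Q α := rfl
    rw [h1, smul_add, smul_smul]
    have hsc : (-((-t) ^ 2)⁻¹ * -(⟪a, Q α⟫ : ℝ)) = (-t)⁻¹ * -(⟪a, Q α⟫ / t) := by
      rw [neg_sq, inv_neg]
      field_simp
    rw [hsc]
  set DP : ℝ := detCols (Fin.cons b P) with hDP
  set DQ : ℝ := detCols (Fin.cons b Q) with hDQ
  clear_value DP DQ
  -- determinant of (N*, ∂N*)
  have hC : detCols (Fin.cons (‖a‖⁻¹ • a) (fun α => pderiv' (fun v => ‖X v‖⁻¹ • X v) u α))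
      = ‖a‖⁻¹ * ((‖a‖⁻¹) ^ m * (t * DP)) := by
    rw [hdN, detCols_cons_smul_head, detCols_cons_colop, detCols_cons_smul_tail]
    congr 1
    congr 1
    have hsplit : a = t • b + (a - t • b) := by abel
    rw [show (Fin.cons a P : Fin (m+1) → EuclideanSpace ℝ (Fin (m+1)))
        = Fin.cons (t • b + (a - t • b)) P by rw [← hsplit]]
    rw [detCols_cons_add_head, detCols_cons_smul_head]
    have hzero : detCols (Fin.cons (a - t • b) P) = 0 := by
      refine detCols_zero_of_orth _ b hb0 ?_
      intro j
      refine Fin.cases ?_ ?_ j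
      · rw [Fin.cons_zero, inner_sub_right, real_inner_smul_right, hbb, hba]
        ring
      · intro α; rw [Fin.cons_succ]; exact hbP α
    rw [hzero, ← hDP]; ring
  -- determinant of (N*, ∂X*)
  have hD : detCols (Fin.cons (‖a‖⁻¹ • a)
        (fun α => pderiv' (fun v => (-(⟪X v, N v⟫ : ℝ))⁻¹ • N v) u α))
      = ‖a‖⁻¹ * (((-t)⁻¹) ^ m * ((‖a‖ ^ 2 / t) * DQ)) := by
    rw [hdX, detCols_cons_smul_head, detCols_cons_smul_tail]
    congr 1
    congr 1
    set w : Fin m → EuclideanSpace ℝ (Fin (m+1)) :=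
      fun α => Q α + (-(⟪a, Q α⟫ / t)) • b with hw
    have hsplit : a = (‖a‖ ^ 2 / t) • b + (a - (‖a‖ ^ 2 / t) • b) := by abel
    rw [show (Fin.cons a w : Fin (m+1) → EuclideanSpace ℝ (Fin (m+1)))
        = Fin.cons ((‖a‖ ^ 2 / t) • b + (a - (‖a‖ ^ 2 / t) • b)) w by rw [← hsplit]]
    rw [detCols_cons_add_head, detCols_cons_smul_head]
    have hzero : detCols (Fin.cons (a - (‖a‖ ^ 2 / t) • b) w) = 0 := by
      refine detCols_zero_of_orth _ a ha0 ?_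
      intro j
      refine Fin.cases ?_ ?_ j
      · rw [Fin.cons_zero, inner_sub_right, real_inner_smul_right,
          real_inner_self_eq_norm_sq, ← htdef]
        field_simp
        ring
      · intro α
        rw [Fin.cons_succ, hw, inner_add_right, real_inner_smul_right, ← htdef]
        field_simp
        ring
    rw [hzero, hw, detCols_cons_colop, ← hDQ]
    ring
  -- conclude
  have hDQ0 : DQ ≠ 0 := by
    intro h
    apply hd'
    rw [hD, h]
    ring
  have hDP0 : DP ≠ 0 := hd
  have hRinner : (⟪(-t)⁻¹ • b, ‖a‖⁻¹ • a⟫ : ℝ) = (-t)⁻¹ * (‖a‖⁻¹ * t) := by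
    rw [real_inner_smul_left, real_inner_smul_right, hba]
  clear_value a b t P Q
  rw [hC, hD, hRinner]
  have hmt : (0:ℝ) < -t := neg_pos.2 ht
  have hmt0 : (-t : ℝ) ≠ 0 := ne_of_gt hmt
  have hnapos : (0:ℝ) < ‖a‖ := lt_of_le_of_ne (norm_nonneg a) (Ne.symm hna)
  have hfrac := frac_aux m t ‖a‖ DP DQ hna hmt0 hDQ0
  rw [hfrac, abs_mul, abs_div, abs_div]
  have e1 : |(-t) ^ m * t ^ 2| = (-t) ^ m * t ^ 2 :=
    abs_of_pos (mul_pos (pow_pos hmt m) (by positivity))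
  have e2 : |‖a‖ ^ (m + 2)| = ‖a‖ ^ (m + 2) := abs_of_pos (pow_pos hnapos _)
  rw [e1, e2, abs_div]
  have hcancel := cancel_aux ((-t) ^ m * t ^ 2 / ‖a‖ ^ (m + 2)) |DP| |DQ|
    (abs_ne_zero.2 hDP0) (abs_ne_zero.2 hDQ0)
  rw [hcancel]
  have hinner2 := inner2_aux t ‖a‖ ht0 hna
  rw [hinner2]
  rw [show ((-‖a‖⁻¹ : ℝ)) = -1 * ‖a‖⁻¹ by ring, mul_pow, ← mul_assoc, ← mul_pow,
    show (t * -1 : ℝ) = -t by ring, inv_pow]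
  ring
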